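/- Let n ≥ 2 be even and let Δ = (g_1 g_2 ⋯ g_n)^{n−1} in the Artin group A(D_n). Then Δ is central in A(D_n); in particular Δ g_i Δ^{-1} = g_i for every i with 1 ≤ i ≤ n. -/
import Mathlib


/-- The braid relation word `i j i (j i j)⁻¹` in the free group. -/
def braidRel {α : Type} (i j : α) : FreeGroup α :=
  FreeGroup.of i * FreeGroup.of j * FreeGroup.of i *
    (FreeGroup.of j * FreeGroup.of i * FreeGroup.of j)⁻¹

/-- The commutation relation word `i j (j i)⁻¹` in the free group. -/
def commRel {α : Type} (i j : α) : FreeGroup α :=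
  FreeGroup.of i * FreeGroup.of j * (FreeGroup.of j * FreeGroup.of i)⁻¹

/-- Joined pairs (for `i < j`, 0-based) of the Coxeter diagram `D_n`:
`g_1—g_3`, `g_2—g_3`, and `g_i—g_{i+1}` for `3 ≤ i ≤ n-1` (1-based). -/
def DnJoined (n : ℕ) (i j : Fin n) : Prop :=
  (i.val = 0 ∧ j.val = 2) ∨ (i.val = 1 ∧ j.val = 2) ∨ (2 ≤ i.val ∧ j.val = i.val + 1)

/-- Defining relations of the Artin group of type `D_n`: joined generators braid,
unjoined generators commute. -/
def DnRels (n : ℕ) : Set (FreeGroup (Fin n)) :=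
  { r | ∃ i j : Fin n, i < j ∧
      ((DnJoined n i j ∧ r = braidRel i j) ∨ (¬ DnJoined n i j ∧ r = commRel i j)) }

/-- The Artin group `A(D_n)`, with generators `g_1, …, g_n` indexed by `Fin n` (0-based). -/
abbrev ArtinD (n : ℕ) : Type := PresentedGroup (DnRels n)

/-- The standard generator `g_{i+1}` of `A(D_n)`. -/
def gD (n : ℕ) (i : Fin n) : ArtinD n := PresentedGroup.of i

/-- The fundamental element `Δ = (g_1 g_2 ⋯ g_n)^{n-1}` of `A(D_n)`. -/
def DeltaD (n : ℕ) : ArtinD n := ((List.ofFn (gD n)).prod) ^ (n - 1)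


section WordLemmas
variable {G : Type*} [Group G] (a b c : G)
variable (hab : a * b = b * a) (hac : a * c * a = c * a * c) (hbc : b * c * b = c * b * c)

include hab hac hbc in
/-- `c a b c a x = b c a b c x` -/
lemma five1x : ∀ x : G, c * (a * (b * (c * (a * x)))) = b * (c * (a * (b * (c * x)))) := by
  intro x
  have habx : ∀ y : G, a * (b * y) = b * (a * y) := fun y => by
    rw [← mul_assoc, hab, mul_assoc]
  have hacx : ∀ y : G, a * (c * (a * y)) = c * (a * (c * y)) := fun y => by
    rw [← mul_assoc, ← mul_assoc, hac, mul_assoc, mul_assoc]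
  have hbcx : ∀ y : G, b * (c * (b * y)) = c * (b * (c * y)) := fun y => by
    rw [← mul_assoc, ← mul_assoc, hbc, mul_assoc, mul_assoc]
  calc c * (a * (b * (c * (a * x))))
      = c * (b * (a * (c * (a * x)))) := by rw [habx]
    _ = c * (b * (c * (a * (c * x)))) := by rw [hacx]
    _ = b * (c * (b * (a * (c * x)))) := by rw [← hbcx]
    _ = b * (c * (a * (b * (c * x)))) := by rw [habx]

include hac hbc in
/-- `a c a b c x = c a b c b x` -/
lemma five2x : ∀ x : G, a * (c * (a * (b * (c * x)))) = c * (a * (b * (c * (b * x)))) := by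
  intro x
  have hacx : ∀ y : G, a * (c * (a * y)) = c * (a * (c * y)) := fun y => by
    rw [← mul_assoc, ← mul_assoc, hac, mul_assoc, mul_assoc]
  have hbcx : ∀ y : G, b * (c * (b * y)) = c * (b * (c * y)) := fun y => by
    rw [← mul_assoc, ← mul_assoc, hbc, mul_assoc, mul_assoc]
  calc a * (c * (a * (b * (c * x))))
      = c * (a * (c * (b * (c * x)))) := by rw [hacx]
    _ = c * (a * (b * (c * (b * x)))) := by rw [← hbcx]

include hab hac hbc in
/-- `(abc)(abc)c = c(abc)(abc)` -/
lemma abc_sq : a * (b * (c * (a * (b * (c * c))))) = c * (a * (b * (c * (a * (b * c))))) := by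
  have habx : ∀ y : G, a * (b * y) = b * (a * y) := fun y => by
    rw [← mul_assoc, hab, mul_assoc]
  have hacx : ∀ y : G, a * (c * (a * y)) = c * (a * (c * y)) := fun y => by
    rw [← mul_assoc, ← mul_assoc, hac, mul_assoc, mul_assoc]
  have hbcx : ∀ y : G, b * (c * (b * y)) = c * (b * (c * y)) := fun y => by
    rw [← mul_assoc, ← mul_assoc, hbc, mul_assoc, mul_assoc]
  calc a * (b * (c * (a * (b * (c * c)))))
      = b * (a * (c * (a * (b * (c * c))))) := by rw [habx]
    _ = b * (c * (a * (c * (b * (c * c))))) := by rw [hacx]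
    _ = b * (c * (a * (b * (c * (b * c))))) := by rw [← hbcx]
    _ = c * (a * (b * (c * (a * (b * c))))) := (five1x a b c hab hac hbc (b * c)).symm

end WordLemmas

namespace DnAux

variable {n : ℕ}

/-- `gD` with natural-number index, junk value `1` out of range. -/
def s (n : ℕ) (k : ℕ) : ArtinD n := if h : k < n then gD n ⟨k, h⟩ else 1

lemma s_eq (k : ℕ) (h : k < n) : s n k = gD n ⟨k, h⟩ := dif_pos h

lemma s_eq_one (k : ℕ) (h : ¬ k < n) : s n k = 1 := dif_neg h

lemma rel_one {r : FreeGroup (Fin n)} (h : r ∈ DnRels n) :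
    PresentedGroup.mk (DnRels n) r = 1 :=
  (QuotientGroup.eq_one_iff _).2 (Subgroup.subset_normalClosure h)

lemma braid {i j : Fin n} (hij : i < j) (hJ : DnJoined n i j) :
    gD n i * gD n j * gD n i = gD n j * gD n i * gD n j := by
  have h1 := rel_one (n := n) ⟨i, j, hij, Or.inl ⟨hJ, rfl⟩⟩
  simp only [braidRel, map_mul, map_inv, mul_inv_eq_one] at h1
  exact h1

lemma commRel_eq {i j : Fin n} (hij : i < j)
    (hNJ : ¬ DnJoined n i j) : gD n i * gD n j = gD n j * gD n i := by
  have h1 := rel_one (n := n) ⟨i, j, hij, Or.inr ⟨hNJ, rfl⟩⟩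
  simp only [commRel, map_mul, map_inv, mul_inv_eq_one] at h1
  exact h1

lemma braid02 (h : 2 < n) : s n 0 * s n 2 * s n 0 = s n 2 * s n 0 * s n 2 := by
  rw [s_eq 0 (by omega), s_eq 2 h]
  exact braid (i := ⟨0, by omega⟩) (j := ⟨2, h⟩) (by simp [Fin.lt_def]) (Or.inl ⟨rfl, rfl⟩)

lemma braid12 (h : 2 < n) : s n 1 * s n 2 * s n 1 = s n 2 * s n 1 * s n 2 := by
  rw [s_eq 1 (by omega), s_eq 2 h]
  exact braid (i := ⟨1, by omega⟩) (j := ⟨2, h⟩) (by simp [Fin.lt_def]) (Or.inr (Or.inl ⟨rfl, rfl⟩))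

lemma braidChain {k : ℕ} (h2 : 2 ≤ k) (h : k + 1 < n) :
    s n k * s n (k+1) * s n k = s n (k+1) * s n k * s n (k+1) := by
  rw [s_eq k (by omega), s_eq (k+1) h]
  exact braid (i := ⟨k, by omega⟩) (j := ⟨k+1, h⟩) (by simp [Fin.lt_def])
    (Or.inr (Or.inr ⟨h2, rfl⟩))

/-- Workhorse commutation lemma; no upper bound on `l` needed thanks to junk values. -/
lemma comm_of {k l : ℕ} (hkl : k < l)
    (hNJ : ¬ ((k = 0 ∧ l = 2) ∨ (k = 1 ∧ l = 2) ∨ (2 ≤ k ∧ l = k + 1))) :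
    s n k * s n l = s n l * s n k := by
  by_cases hl : l < n
  · have hk : k < n := lt_trans hkl hl
    rw [s_eq k hk, s_eq l hl]
    refine commRel_eq (by simp [Fin.lt_def, hkl]) ?_
    simpa [DnJoined] using hNJ
  · rw [s_eq_one l hl, mul_one, one_mul]

lemma comm01 (h : 1 < n) : s n 0 * s n 1 = s n 1 * s n 0 :=
  comm_of (by omega) (by omega)

/-- Partial product `T n m = s 0 * s 1 * ⋯ * s (m-1)`. -/
def T (n : ℕ) : ℕ → ArtinD n
  | 0 => 1
  | m+1 => T n m * s n m

/-- `W n j = s 2 * s 3 * ⋯ * s (j+1)`. -/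
def W (n : ℕ) : ℕ → ArtinD n
  | 0 => 1
  | j+1 => W n j * s n (j+2)

/-- `Wsh n j = s 3 * s 4 * ⋯ * s (j+2)`. -/
def Wsh (n : ℕ) : ℕ → ArtinD n
  | 0 => 1
  | j+1 => Wsh n j * s n (j+3)

/-- (K0) A generator `s j` with `3 ≤ j` and `k ≤ j` commutes with the prefix `T n k`. -/
lemma T_comm {j k : ℕ} (h3 : 3 ≤ j) (hk : k < j) :
    T n k * s n j = s n j * T n k := by
  induction k with
  | zero => simp [T]
  | succ k ih =>
      have hk' : k < j := by omega
      have hcomm : s n k * s n j = s n j * s n k := comm_of (show k < j by omega) (by omega)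
      calc T n (k+1) * s n j = T n k * (s n k * s n j) := by rw [T, mul_assoc]
        _ = T n k * s n j * s n k := by rw [hcomm, ← mul_assoc]
        _ = s n j * T n (k+1) := by rw [ih hk', T, mul_assoc]

/-- (K1) shift lemma: `T n m` conjugates `s k` to `s (k+1)` for `2 ≤ k ≤ m - 2`. -/
lemma T_shift {m k : ℕ} (h2 : 2 ≤ k) (hm : k + 2 ≤ m) (hmn : m ≤ n) :
    T n m * s n k = s n (k+1) * T n m := by
  induction m with
  | zero => omega
  | succ m ih =>
      rcases Nat.lt_or_ge (k+2) (m+1) with hlt | hge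
      · -- m ≥ k + 2 : the new letter `s m` commutes with `s k`
        have hcomm : s n k * s n m = s n m * s n k := comm_of (by omega) (by omega)
        calc T n (m+1) * s n k = T n m * (s n m * s n k) := by rw [T, mul_assoc]
          _ = T n m * s n k * s n m := by rw [← hcomm, ← mul_assoc]
          _ = s n (k+1) * T n (m+1) := by rw [ih (by omega) (by omega), T, mul_assoc]
      · -- base case : m + 1 = k + 2, i.e. m = k + 1
        have hm1 : m = k + 1 := by omega
        subst hm1
        have hbr : s n k * (s n (k+1) * s n k) = s n (k+1) * (s n k * s n (k+1)) := by
          simpa [mul_assoc] using braidChain (n := n) h2 (by omega)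
        have hTc : T n k * s n (k+1) = s n (k+1) * T n k := T_comm (by omega) (by omega)
        simp only [T, mul_assoc]
        rw [hbr, ← mul_assoc (T n k), hTc, mul_assoc]

lemma T_three : T n 3 = s n 0 * (s n 1 * s n 2) := by
  show T n (2+1) = _
  rw [T, show (2:ℕ) = 1+1 from rfl, T, show (1:ℕ) = 0+1 from rfl, T, T]
  rw [one_mul, mul_assoc]

/-- (K2) `T m · T m · s (m-1) = s 2 · T m · T m`. -/
lemma T_sq : ∀ m, 2 ≤ m → m + 1 ≤ n →
    T n (m+1) * T n (m+1) * s n m = s n 2 * (T n (m+1) * T n (m+1)) := by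
  intro m hm
  induction m, hm using Nat.le_induction with
  | base =>
      intro h3
      have hab := comm01 (n := n) (by omega)
      have hac := braid02 (n := n) (by omega)
      have hbc := braid12 (n := n) (by omega)
      have habc := abc_sq (s n 0) (s n 1) (s n 2) hab hac hbc
      show T n 3 * T n 3 * s n 2 = s n 2 * (T n 3 * T n 3)
      rw [T_three]
      simp only [mul_assoc]
      simpa [mul_assoc] using habc
  | succ m hm ih =>
      intro hn1
      have IH := ih (by omega)
      have hTm1 : T n (m+1) = T n m * s n m := rfl
      have key : T n (m+1) * T n (m+1) = s n 2 * (T n (m+1) * T n m) := by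
        apply mul_right_cancel (b := s n m)
        calc T n (m+1) * T n (m+1) * s n m = s n 2 * (T n (m+1) * T n (m+1)) := IH
          _ = s n 2 * (T n (m+1) * T n m) * s n m := by
              simp only [mul_assoc, ← hTm1]
      have keyx : ∀ x : ArtinD n,
          T n m * (s n m * (T n m * (s n m * x))) = s n 2 * (T n m * (s n m * (T n m * x))) := by
        intro x
        have h := congrArg (· * x) key
        simpa [hTm1, mul_assoc] using h
      have hswapx : ∀ x : ArtinD n,
          s n (m+1) * (T n m * x) = T n m * (s n (m+1) * x) := by
        intro x
        rw [← mul_assoc, ← mul_assoc, T_comm (by omega) (by omega)]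
      have hbrx : ∀ x : ArtinD n,
          s n (m+1) * (s n m * (s n (m+1) * x)) = s n m * (s n (m+1) * (s n m * x)) := by
        intro x
        have hb := braidChain (n := n) (k := m) (by omega) (by omega)
        rw [← mul_assoc, ← mul_assoc, ← hb, mul_assoc, mul_assoc]
      show T n (m+2) * T n (m+2) * s n (m+1) = s n 2 * (T n (m+2) * T n (m+2))
      have hTm2 : T n (m+2) = T n (m+1) * s n (m+1) := rfl
      rw [hTm2, hTm1]
      simp only [mul_assoc]
      rw [hswapx, hbrx, keyx, hswapx]

/-- (K3a) `s2 · T m · s0 = s1 · s2 · T m`. -/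
lemma T_s0 : ∀ m, 3 ≤ m → m ≤ n → s n 2 * (T n m * s n 0) = s n 1 * (s n 2 * T n m) := by
  intro m hm
  induction m, hm using Nat.le_induction with
  | base =>
      intro h3
      have hab := comm01 (n := n) (by omega)
      have hac := braid02 (n := n) (by omega)
      have hbc := braid12 (n := n) (by omega)
      have h5 := five1x (s n 0) (s n 1) (s n 2) hab hac hbc 1
      rw [T_three]
      simp only [mul_one] at h5
      simpa [mul_assoc] using h5
  | succ m hm ih =>
      intro hn1
      have IH := ih (by omega)
      have hcomm : s n 0 * s n m = s n m * s n 0 := comm_of (by omega) (by omega)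
      have hTm1 : T n (m+1) = T n m * s n m := rfl
      calc s n 2 * (T n (m+1) * s n 0)
          = s n 2 * (T n m * (s n m * s n 0)) := by rw [hTm1, mul_assoc]
        _ = s n 2 * (T n m * s n 0) * s n m := by rw [← hcomm, ← mul_assoc, ← mul_assoc, mul_assoc (s n 2)]
        _ = s n 1 * (s n 2 * T n m) * s n m := by rw [IH]
        _ = s n 1 * (s n 2 * T n (m+1)) := by rw [hTm1, mul_assoc, mul_assoc]

/-- (K3b) `s2 · T m · s1 = s0 · s2 · T m`. -/
lemma T_s1 : ∀ m, 3 ≤ m → m ≤ n → s n 2 * (T n m * s n 1) = s n 0 * (s n 2 * T n m) := by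
  intro m hm
  induction m, hm using Nat.le_induction with
  | base =>
      intro h3
      have hab := comm01 (n := n) (by omega)
      have hac := braid02 (n := n) (by omega)
      have hbc := braid12 (n := n) (by omega)
      have h5 := five2x (s n 0) (s n 1) (s n 2) hac hbc 1
      rw [T_three]
      simp only [mul_one] at h5
      simp only [mul_assoc]
      exact h5.symm
  | succ m hm ih =>
      intro hn1
      have IH := ih (by omega)
      have hcomm : s n 1 * s n m = s n m * s n 1 := comm_of (by omega) (by omega)
      have hTm1 : T n (m+1) = T n m * s n m := rfl
      calc s n 2 * (T n (m+1) * s n 1)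
          = s n 2 * (T n m * (s n m * s n 1)) := by rw [hTm1, mul_assoc]
        _ = s n 2 * (T n m * s n 1) * s n m := by rw [← hcomm, ← mul_assoc, ← mul_assoc, mul_assoc (s n 2)]
        _ = s n 0 * (s n 2 * T n m) * s n m := by rw [IH]
        _ = s n 0 * (s n 2 * T n (m+1)) := by rw [hTm1, mul_assoc, mul_assoc]

lemma T_W : ∀ m, T n (m+2) = s n 0 * (s n 1 * W n m) := by
  intro m
  induction m with
  | zero =>
      show T n (0+1+1) = _
      rw [T, T, T, W, one_mul, mul_one]
  | succ m ih =>
      show T n (m+2+1) = _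
      rw [T, ih, W, mul_assoc, mul_assoc]

/-- (K6) `δ · W j = Wsh j · δ`. -/
lemma delta_W : ∀ j, j + 3 ≤ n → T n n * W n j = Wsh n j * T n n := by
  intro j
  induction j with
  | zero => intro _; rw [W, Wsh, one_mul, mul_one]
  | succ j ih =>
      intro hj
      calc T n n * W n (j+1) = (T n n * W n j) * s n (j+2) := by rw [W, mul_assoc]
        _ = Wsh n j * (T n n * s n (j+2)) := by rw [ih (by omega), mul_assoc]
        _ = Wsh n j * (s n (j+3) * T n n) := by
            rw [T_shift (by omega) (by omega) (le_refl n)]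
        _ = Wsh n (j+1) * T n n := by rw [Wsh, mul_assoc]

/-- (K7) `s 2 · Wsh j = W (j+1)`. -/
lemma s2_Wsh : ∀ j, s n 2 * Wsh n j = W n (j+1) := by
  intro j
  induction j with
  | zero => rw [Wsh, W, W, mul_one, one_mul]
  | succ j ih =>
      calc s n 2 * Wsh n (j+1) = (s n 2 * Wsh n j) * s n (j+3) := by rw [Wsh, mul_assoc]
        _ = W n (j+1) * s n (j+3) := by rw [ih]
        _ = W n (j+2) := (show W n (j+2) = W n (j+1) * s n (j+3) from rfl).symm

/-- Single step of the conjugation chain for the fork generators. -/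
lemma step_core {j : ℕ} (hj : j + 3 ≤ n) {z z' z₀ : ArtinD n}
    (hz : s n 2 * (T n n * z) = z' * (s n 2 * T n n))
    (prev : W n j * (T n n ^ j * z₀) = z * (W n j * T n n ^ j)) :
    W n (j+1) * (T n n ^ (j+1) * z₀) = z' * (W n (j+1) * T n n ^ (j+1)) := by
  have hW := delta_W (n := n) j (by omega)
  calc W n (j+1) * (T n n ^ (j+1) * z₀)
      = (s n 2 * Wsh n j) * (T n n * (T n n ^ j * z₀)) := by rw [s2_Wsh, pow_succ', mul_assoc]
    _ = s n 2 * ((Wsh n j * T n n) * (T n n ^ j * z₀)) := by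
        rw [mul_assoc, ← mul_assoc (Wsh n j)]
    _ = s n 2 * ((T n n * W n j) * (T n n ^ j * z₀)) := by rw [hW]
    _ = s n 2 * (T n n * (W n j * (T n n ^ j * z₀))) := by rw [mul_assoc]
    _ = s n 2 * (T n n * (z * (W n j * T n n ^ j))) := by rw [prev]
    _ = (s n 2 * (T n n * z)) * (W n j * T n n ^ j) := by
        rw [mul_assoc, mul_assoc]
    _ = z' * ((s n 2 * T n n) * (W n j * T n n ^ j)) := by rw [hz, mul_assoc]
    _ = z' * (s n 2 * ((T n n * W n j) * T n n ^ j)) := by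
        rw [mul_assoc (s n 2), mul_assoc (T n n)]
    _ = z' * (s n 2 * ((Wsh n j * T n n) * T n n ^ j)) := by rw [hW]
    _ = z' * ((s n 2 * Wsh n j) * (T n n * T n n ^ j)) := by
        rw [mul_assoc (s n 2), mul_assoc (Wsh n j)]
    _ = z' * (W n (j+1) * T n n ^ (j+1)) := by rw [s2_Wsh, pow_succ']

/-- (K5) the conjugation chain for the two fork generators. -/
lemma chain : ∀ j, j + 2 ≤ n →
    (W n j * (T n n ^ j * s n 0) =
      (if Even j then s n 0 else s n 1) * (W n j * T n n ^ j)) ∧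
    (W n j * (T n n ^ j * s n 1) =
      (if Even j then s n 1 else s n 0) * (W n j * T n n ^ j)) := by
  intro j
  induction j with
  | zero => intro _; simp [W]
  | succ j ih =>
      intro hj
      have hprev := ih (by omega)
      have h0 : s n 2 * (T n n * s n 0) = s n 1 * (s n 2 * T n n) :=
        T_s0 n (by omega) (le_refl n)
      have h1 : s n 2 * (T n n * s n 1) = s n 0 * (s n 2 * T n n) :=
        T_s1 n (by omega) (le_refl n)
      obtain ⟨hp1, hp2⟩ := hprev
      rcases Nat.even_or_odd j with hev | hodd
      · rw [if_pos hev] at hp1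
        rw [if_pos hev] at hp2
        have hne : ¬ Even (j+1) := by simp [Nat.even_add_one, hev]
        rw [if_neg hne, if_neg hne]
        exact ⟨step_core (by omega) h0 hp1, step_core (by omega) h1 hp2⟩
      · have hne : ¬ Even j := Nat.not_even_iff_odd.mpr hodd
        rw [if_neg hne] at hp1
        rw [if_neg hne] at hp2
        have hev1 : Even (j+1) := Nat.even_add_one.mpr hne
        rw [if_pos hev1, if_pos hev1]
        exact ⟨step_core (by omega) h1 hp1, step_core (by omega) h0 hp2⟩

lemma pow_shift : ∀ j, j + 3 ≤ n → T n n ^ j * s n 2 = s n (2+j) * T n n ^ j := by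
  intro j
  induction j with
  | zero => intro _; rw [pow_zero, one_mul, mul_one]
  | succ j ih =>
      intro hj
      show T n n ^ (j+1) * s n 2 = s n (2+j+1) * T n n ^ (j+1)
      calc T n n ^ (j+1) * s n 2 = T n n * (T n n ^ j * s n 2) := by
            rw [pow_succ', mul_assoc]
        _ = T n n * (s n (2+j) * T n n ^ j) := by rw [ih (by omega)]
        _ = (T n n * s n (2+j)) * T n n ^ j := by rw [mul_assoc]
        _ = (s n (2+j+1) * T n n) * T n n ^ j := by
            rw [T_shift (by omega) (by omega) (le_refl n)]
        _ = s n (2+j+1) * T n n ^ (j+1) := by rw [pow_succ', mul_assoc]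

lemma comm_s2_pow (h3 : 3 ≤ n) : T n n ^ (n-1) * s n 2 = s n 2 * T n n ^ (n-1) := by
  have hE : n - 1 = 2 + (n-3) := by omega
  have hsq := T_sq (n := n) (n-1) (by omega) (by omega)
  have hT : T n (n-1+1) = T n n := congrArg (T n) (by omega)
  rw [hT] at hsq
  have hps := pow_shift (n := n) (n-3) (by omega)
  have h2j : 2 + (n-3) = n - 1 := by omega
  rw [h2j] at hps
  calc T n n ^ (n-1) * s n 2 = (T n n ^ 2 * T n n ^ (n-3)) * s n 2 := by rw [hE, pow_add]
    _ = T n n ^ 2 * (T n n ^ (n-3) * s n 2) := by rw [mul_assoc]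
    _ = T n n ^ 2 * (s n (n-1) * T n n ^ (n-3)) := by rw [hps]
    _ = (T n n * T n n * s n (n-1)) * T n n ^ (n-3) := by
        rw [pow_two, ← mul_assoc (T n n * T n n)]
    _ = (s n 2 * (T n n * T n n)) * T n n ^ (n-3) := by rw [hsq]
    _ = s n 2 * T n n ^ (n-1) := by rw [hE, pow_add, pow_two, mul_assoc]

lemma comm_sk {k : ℕ} (h2 : 2 ≤ k) (hk : k < n) :
    T n n ^ (n-1) * s n k = s n k * T n n ^ (n-1) := by
  have h3 : 3 ≤ n := by omega
  have hps := pow_shift (n := n) (k-2) (by omega)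
  have h2j : 2 + (k-2) = k := by omega
  rw [h2j] at hps
  have hB := comm_s2_pow (n := n) h3
  have hcp : T n n ^ (n-1) * T n n ^ (k-2) = T n n ^ (k-2) * T n n ^ (n-1) := by
    rw [← pow_add, Nat.add_comm, pow_add]
  apply mul_right_cancel (b := T n n ^ (k-2))
  calc T n n ^ (n-1) * s n k * T n n ^ (k-2)
      = T n n ^ (n-1) * (s n k * T n n ^ (k-2)) := by rw [mul_assoc]
    _ = T n n ^ (n-1) * (T n n ^ (k-2) * s n 2) := by rw [← hps]
    _ = (T n n ^ (n-1) * T n n ^ (k-2)) * s n 2 := by rw [mul_assoc]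
    _ = T n n ^ (k-2) * (T n n ^ (n-1) * s n 2) := by rw [hcp, mul_assoc]
    _ = T n n ^ (k-2) * (s n 2 * T n n ^ (n-1)) := by rw [hB]
    _ = (T n n ^ (k-2) * s n 2) * T n n ^ (n-1) := by rw [mul_assoc]
    _ = (s n k * T n n ^ (k-2)) * T n n ^ (n-1) := by rw [hps]
    _ = s n k * T n n ^ (n-1) * T n n ^ (k-2) := by rw [mul_assoc, mul_assoc, ← hcp.symm]

lemma comm_s0 (hn : 2 ≤ n) (heven : Even n) :
    T n n ^ (n-1) * s n 0 = s n 0 * T n n ^ (n-1) := by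
  have hev_e : Even (n-2) := by rw [Nat.even_sub hn]; simp [heven]
  have hc := (chain (n := n) (n-2) (by omega)).1
  rw [if_pos hev_e] at hc
  have hTW : T n n = s n 0 * (s n 1 * W n (n-2)) := by
    rw [← T_W]; exact congrArg (T n) (by omega)
  have hE : n - 1 = (n-2) + 1 := by omega
  have hab : s n 0 * s n 1 = s n 1 * s n 0 := comm01 (by omega)
  rw [hE]
  calc T n n ^ ((n-2)+1) * s n 0
      = T n n * (T n n ^ (n-2) * s n 0) := by rw [pow_succ', mul_assoc]
    _ = s n 0 * (s n 1 * (W n (n-2) * (T n n ^ (n-2) * s n 0))) := by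
        rw [hTW, mul_assoc, mul_assoc]
    _ = s n 0 * (s n 1 * (s n 0 * (W n (n-2) * T n n ^ (n-2)))) := by rw [hc]
    _ = s n 0 * (s n 0 * (s n 1 * (W n (n-2) * T n n ^ (n-2)))) := by
        rw [← mul_assoc (s n 1), ← hab, mul_assoc]
    _ = s n 0 * (T n n * T n n ^ (n-2)) := by rw [hTW, mul_assoc, mul_assoc]
    _ = s n 0 * T n n ^ ((n-2)+1) := by rw [pow_succ']

lemma comm_s1 (hn : 2 ≤ n) (heven : Even n) :
    T n n ^ (n-1) * s n 1 = s n 1 * T n n ^ (n-1) := by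
  have hev_e : Even (n-2) := by rw [Nat.even_sub hn]; simp [heven]
  have hc := (chain (n := n) (n-2) (by omega)).2
  rw [if_pos hev_e] at hc
  have hTW : T n n = s n 0 * (s n 1 * W n (n-2)) := by
    rw [← T_W]; exact congrArg (T n) (by omega)
  have hE : n - 1 = (n-2) + 1 := by omega
  have hab : s n 0 * s n 1 = s n 1 * s n 0 := comm01 (by omega)
  rw [hE]
  calc T n n ^ ((n-2)+1) * s n 1
      = T n n * (T n n ^ (n-2) * s n 1) := by rw [pow_succ', mul_assoc]
    _ = s n 0 * (s n 1 * (W n (n-2) * (T n n ^ (n-2) * s n 1))) := by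
        rw [hTW, mul_assoc, mul_assoc]
    _ = s n 0 * (s n 1 * (s n 1 * (W n (n-2) * T n n ^ (n-2)))) := by rw [hc]
    _ = s n 1 * (s n 0 * (s n 1 * (W n (n-2) * T n n ^ (n-2)))) := by
        rw [← mul_assoc, ← mul_assoc, hab]; simp only [mul_assoc]
    _ = s n 1 * (T n n * T n n ^ (n-2)) := by rw [hTW]; simp only [mul_assoc]
    _ = s n 1 * T n n ^ ((n-2)+1) := by rw [pow_succ']

/-- The commuting lemma for every generator. -/
lemma comm_g (hn : 2 ≤ n) (heven : Even n) (i : Fin n) :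
    T n n ^ (n-1) * gD n i = gD n i * T n n ^ (n-1) := by
  have hg : gD n i = s n i.val := by rw [s_eq i.val i.isLt]
  rw [hg]
  rcases Nat.lt_or_ge i.val 2 with h2 | h2
  · interval_cases h : i.val
    · exact comm_s0 hn heven
    · exact comm_s1 hn heven
  · exact comm_sk h2 i.isLt

lemma T_eq_prod : ∀ m, T n m = ((List.range m).map (s n)).prod := by
  intro m
  induction m with
  | zero => simp [T]
  | succ m ih => rw [T, ih, List.range_succ]; simp

lemma delta_eq : (List.ofFn (gD n)).prod = T n n := by
  rw [T_eq_prod]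
  congr 1
  apply List.ext_getElem
  · simp
  · intro i h1 h2
    simp only [List.getElem_ofFn, List.getElem_map, List.getElem_range]
    rw [s_eq i (by simpa using h1)]

end DnAux

/-- For even `n ≥ 2`, the fundamental element `Δ = (g_1 ⋯ g_n)^{n-1}` is central in
`A(D_n)`; in particular it conjugates every generator to itself. -/
theorem statement1 (n : ℕ) (hn : 2 ≤ n) (heven : Even n) :
    DeltaD n ∈ Subgroup.center (ArtinD n) ∧
    ∀ i : Fin n, DeltaD n * gD n i * (DeltaD n)⁻¹ = gD n i := by
  have hδ : DeltaD n = DnAux.T n n ^ (n-1) := by rw [DeltaD, DnAux.delta_eq]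
  have hgen : ∀ i : Fin n, DeltaD n * gD n i = gD n i * DeltaD n := by
    intro i; rw [hδ]; exact DnAux.comm_g hn heven i
  have hall : ∀ x : ArtinD n, DeltaD n * x = x * DeltaD n := by
    intro x
    have hx : x ∈ Subgroup.centralizer {DeltaD n} := by
      apply PresentedGroup.generated_by
      intro j
      rw [Subgroup.mem_centralizer_iff]
      intro h hh
      rw [Set.mem_singleton_iff] at hh
      subst hh
      exact hgen j
    exact Subgroup.mem_centralizer_iff.mp hx _ rfl
  refine ⟨Subgroup.mem_center_iff.mpr fun g => (hall g).symm, fun i => ?_⟩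
  rw [hgen i, mul_inv_cancel_right]
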